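/- arXiv:1703.01062 — 3 statements merged into one kernel-verified Lean document; each statement's English description precedes it below -/
import Mathlib

section
/- Given K ≥ 1 and positive constants γ₁, ..., γ_K, the sum-throughput Σᵢ τᵢ log₂(1 + γᵢ/τᵢ) subject to Σᵢ τᵢ ≤ 1 and τᵢ > 0 is maximized by τᵢ* = γᵢ / (Σⱼ γⱼ), achieving the maximum value log₂(1 + Σⱼ γⱼ). -/
/-- tangent line bound: for x > -1, G > -1, log(1+x) ≤ log(1+G) + (x-G)/(1+G) -/
lemma log_tangent {x G : ℝ} (hx : 0 < 1 + x) (hG : 0 < 1 + G) :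
    Real.log (1 + x) ≤ Real.log (1 + G) + (x - G) / (1 + G) := by
  have h := Real.log_le_sub_one_of_pos (x := (1 + x) / (1 + G)) (by positivity)
  rw [Real.log_div (ne_of_gt hx) (ne_of_gt hG)] at h
  have : (1 + x) / (1 + G) - 1 = (x - G) / (1 + G) := by field_simp; ring
  linarith [this ▸ h]

/-- With K ≥ 1 users and γᵢ > 0, the sum-throughput Σᵢ τᵢ log₂(1 + γᵢ/τᵢ)
subject to Σᵢ τᵢ ≤ 1, τᵢ > 0, is maximized by τᵢ* = γᵢ/(Σⱼ γⱼ), achieving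
the value log₂(1 + Σⱼ γⱼ). -/
theorem stmt_6 (K : ℕ) (hK : 1 ≤ K) (γ : Fin K → ℝ) (hγ : ∀ i, 0 < γ i)
    (τstar : Fin K → ℝ) (hτstar : ∀ i, τstar i = γ i / ∑ j, γ j) :
    (∀ i, 0 < τstar i) ∧ (∑ i, τstar i ≤ 1) ∧
      (∑ i, τstar i * Real.logb 2 (1 + γ i / τstar i) =
        Real.logb 2 (1 + ∑ j, γ j)) ∧
      ∀ τ : Fin K → ℝ, (∀ i, 0 < τ i) → (∑ i, τ i ≤ 1) →
        ∑ i, τ i * Real.logb 2 (1 + γ i / τ i) ≤ Real.logb 2 (1 + ∑ j, γ j) := by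
  have hne : Nonempty (Fin K) := ⟨⟨0, by omega⟩⟩
  set G := ∑ j, γ j with hGdef
  have hGpos : 0 < G := Finset.sum_pos (fun i _ => hγ i) Finset.univ_nonempty
  have hsum : ∑ i, τstar i = 1 := by
    simp only [hτstar]
    rw [← Finset.sum_div]
    exact div_self (ne_of_gt hGpos)
  have hpos : ∀ i, 0 < τstar i := fun i => by
    rw [hτstar]; exact div_pos (hγ i) hGpos
  refine ⟨hpos, le_of_eq hsum, ?_, ?_⟩
  · have : ∀ i, τstar i * Real.logb 2 (1 + γ i / τstar i)
        = τstar i * Real.logb 2 (1 + G) := by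
      intro i
      rw [hτstar, div_div_eq_mul_div, mul_comm (γ i) G, mul_div_assoc,
        div_self (ne_of_gt (hγ i)), mul_one]
    calc ∑ i, τstar i * Real.logb 2 (1 + γ i / τstar i)
        = ∑ i, τstar i * Real.logb 2 (1 + G) :=
          Finset.sum_congr rfl (fun i _ => this i)
      _ = (∑ i, τstar i) * Real.logb 2 (1 + G) := (Finset.sum_mul _ _ _).symm
      _ = Real.logb 2 (1 + G) := by rw [hsum, one_mul]
  · intro τ hτpos hτsum
    have hlog2 : (0:ℝ) < Real.log 2 := Real.log_pos (by norm_num)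
    have h1G : (0:ℝ) < 1 + G := by linarith
    -- per-term bound in natural log
    have key : ∀ i, τ i * Real.log (1 + γ i / τ i)
        ≤ τ i * Real.log (1 + G) + (γ i - τ i * G) / (1 + G) := by
      intro i
      have hxi : 0 < 1 + γ i / τ i := by
        have := div_pos (hγ i) (hτpos i); linarith
      have h := log_tangent hxi h1G
      have h2 := mul_le_mul_of_nonneg_left h (le_of_lt (hτpos i))
      have hτγ : τ i * (γ i / τ i) = γ i := mul_div_cancel₀ _ (hτpos i).ne'
      have : τ i * (Real.log (1 + G) + (γ i / τ i - G) / (1 + G))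
          = τ i * Real.log (1 + G) + (γ i - τ i * G) / (1 + G) := by
        rw [mul_add, mul_div_assoc', mul_sub, hτγ]
      linarith [this ▸ h2]
    have hsumlog : ∑ i, τ i * Real.log (1 + γ i / τ i)
        ≤ (∑ i, τ i) * Real.log (1 + G) + (G - (∑ i, τ i) * G) / (1 + G) := by
      calc ∑ i, τ i * Real.log (1 + γ i / τ i)
          ≤ ∑ i, (τ i * Real.log (1 + G) + (γ i - τ i * G) / (1 + G)) :=
            Finset.sum_le_sum (fun i _ => key i)
        _ = (∑ i, τ i) * Real.log (1 + G) + (G - (∑ i, τ i) * G) / (1 + G) := by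
            rw [Finset.sum_add_distrib, ← Finset.sum_mul, ← Finset.sum_div,
              Finset.sum_sub_distrib, ← Finset.sum_mul]
    -- G/(1+G) ≤ log(1+G)
    have hGle : G / (1 + G) ≤ Real.log (1 + G) := by
      have h := Real.log_le_sub_one_of_pos (x := 1 / (1 + G)) (by positivity)
      rw [Real.log_div one_ne_zero (ne_of_gt h1G), Real.log_one] at h
      have : 1 / (1 + G) - 1 = -(G / (1 + G)) := by field_simp; ring
      linarith [this ▸ h]
    set S := ∑ i, τ i with hSdef
    have hfinal : ∑ i, τ i * Real.log (1 + γ i / τ i) ≤ Real.log (1 + G) := by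
      have h1 : (G - S * G) / (1 + G) = (1 - S) * (G / (1 + G)) := by ring
      have h2 : (1 - S) * (G / (1 + G)) ≤ (1 - S) * Real.log (1 + G) :=
        mul_le_mul_of_nonneg_left hGle (by linarith)
      calc ∑ i, τ i * Real.log (1 + γ i / τ i)
          ≤ S * Real.log (1 + G) + (G - S * G) / (1 + G) := hsumlog
        _ ≤ S * Real.log (1 + G) + (1 - S) * Real.log (1 + G) := by
            rw [h1]; linarith
        _ = Real.log (1 + G) := by ring
    -- convert to logb
    simp only [Real.logb, div_eq_mul_inv, ← mul_assoc] at *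
    calc ∑ i, τ i * Real.log (1 + γ i / τ i) * (Real.log 2)⁻¹
        = (∑ i, τ i * Real.log (1 + γ i / τ i)) * (Real.log 2)⁻¹ := by
          rw [Finset.sum_mul]
      _ ≤ Real.log (1 + G) * (Real.log 2)⁻¹ :=
          mul_le_mul_of_nonneg_right hfinal (by positivity)
end

section
/- For any feasible allocation τ with τᵢ > 0 and Σᵢ τᵢ ≤ 1, the sum-throughput satisfies Σᵢ τᵢ log₂(1 + γᵢ/τᵢ) ≤ log₂(1 + Σᵢ γᵢ), with equality if and only if τᵢ = γᵢ/(Σⱼ γⱼ) for all i. -/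
lemma aux_term (S t g : ℝ) (ht : 0 < t) (hg : 0 < g) (hS : 0 < S) :
    t * Real.log (1 + g / t) ≤ t * Real.log (1 + S) + (g - t * S) / (1 + S) ∧
    (t * Real.log (1 + g / t) = t * Real.log (1 + S) + (g - t * S) / (1 + S) ↔ g = t * S) := by
  have h1S : (0:ℝ) < 1 + S := by linarith
  set x := (t + g) / (t * (1 + S)) with hxdef
  have hx : 0 < x := by positivity
  have hrw : 1 + g / t = x * (1 + S) := by
    rw [hxdef]; field_simp
  have hlog : Real.log (1 + g / t) = Real.log x + Real.log (1 + S) := by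
    rw [hrw, Real.log_mul (ne_of_gt hx) (ne_of_gt h1S)]
  have htx : t * (x - 1) = (g - t * S) / (1 + S) := by
    rw [hxdef]; field_simp; ring
  have hxg : x = 1 ↔ g = t * S := by
    rw [hxdef, div_eq_one_iff_eq (by positivity)]
    constructor <;> intro h <;> nlinarith
  by_cases hx1 : x = 1
  · have hg' : g = t * S := hxg.mp hx1
    have hz : (g - t * S) / (1 + S) = 0 := by rw [hg']; simp
    constructor
    · rw [hlog, hx1, Real.log_one]; rw [hz]; ring_nf; exact le_refl _
    · constructor
      · intro _; exact hg'
      · intro _; rw [hlog, hx1, Real.log_one, hz]; ring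
  · have hlt := Real.log_lt_sub_one_of_pos hx hx1
    have h2 : t * Real.log x < (g - t * S) / (1 + S) := by
      rw [← htx]; nlinarith
    constructor
    · rw [hlog]; nlinarith
    · constructor
      · intro h; exfalso; rw [hlog] at h; nlinarith
      · intro h; exact absurd (hxg.mpr h) hx1

lemma aux_S (S : ℝ) (hS : 0 < S) : S / (1 + S) < Real.log (1 + S) := by
  have h1S : (0:ℝ) < 1 + S := by linarith
  have h := Real.log_lt_sub_one_of_pos (x := 1/(1+S)) (by positivity) (by
    intro hcon
    rw [div_eq_one_iff_eq (ne_of_gt h1S)] at hcon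
    linarith)
  rw [Real.log_div one_ne_zero (ne_of_gt h1S), Real.log_one] at h
  have he : 1/(1+S) - 1 = -(S/(1+S)) := by field_simp; ring
  rw [he] at h
  linarith

/-- For any feasible τ (τᵢ > 0, Σᵢ τᵢ ≤ 1),
Σᵢ τᵢ log₂(1 + γᵢ/τᵢ) ≤ log₂(1 + Σᵢ γᵢ), with equality iff
τᵢ = γᵢ/(Σⱼ γⱼ) for all i. -/
theorem stmt_7 (K : ℕ) (γ : Fin K → ℝ) (hγ : ∀ i, 0 < γ i)
    (τ : Fin K → ℝ) (hτ : ∀ i, 0 < τ i) (hsum : ∑ i, τ i ≤ 1) :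
    (∑ i, τ i * Real.logb 2 (1 + γ i / τ i) ≤ Real.logb 2 (1 + ∑ i, γ i)) ∧
      (∑ i, τ i * Real.logb 2 (1 + γ i / τ i) = Real.logb 2 (1 + ∑ i, γ i) ↔
        ∀ i, τ i = γ i / ∑ j, γ j) := by
  rcases Nat.eq_zero_or_pos K with hK | hK
  · subst hK
    simp
  haveI : Nonempty (Fin K) := Fin.pos_iff_nonempty.mp hK
  set S := ∑ i, γ i with hSdef
  have hS : 0 < S := Finset.sum_pos (fun i _ => hγ i) Finset.univ_nonempty
  have h1S : (0:ℝ) < 1 + S := by linarith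
  have hlog2 : 0 < Real.log 2 := Real.log_pos (by norm_num)
  set T := ∑ i, τ i with hTdef
  have hterm := fun i => aux_term S (τ i) (γ i) (hτ i) (hγ i) hS
  have hsumle : ∑ i, τ i * Real.log (1 + γ i / τ i)
      ≤ ∑ i, (τ i * Real.log (1 + S) + (γ i - τ i * S) / (1 + S)) :=
    Finset.sum_le_sum (fun i _ => (hterm i).1)
  have hrhs : ∑ i, (τ i * Real.log (1 + S) + (γ i - τ i * S) / (1 + S))
      = T * Real.log (1 + S) + (S - T * S) / (1 + S) := by
    rw [Finset.sum_add_distrib, ← Finset.sum_mul, ← Finset.sum_div,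
      Finset.sum_sub_distrib, ← Finset.sum_mul]
  have hQ := aux_S S hS
  have hsplit : (S - T * S) / (1 + S) = (1 - T) * (S / (1 + S)) := by ring
  have hfin : T * Real.log (1 + S) + (S - T * S) / (1 + S) ≤ Real.log (1 + S) := by
    rw [hsplit]
    nlinarith [mul_nonneg (by linarith : (0:ℝ) ≤ 1 - T) (le_of_lt (sub_pos.mpr hQ))]
  have hmainlog : ∑ i, τ i * Real.log (1 + γ i / τ i) ≤ Real.log (1 + S) := by
    calc ∑ i, τ i * Real.log (1 + γ i / τ i)
        ≤ ∑ i, (τ i * Real.log (1 + S) + (γ i - τ i * S) / (1 + S)) := hsumle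
      _ = T * Real.log (1 + S) + (S - T * S) / (1 + S) := hrhs
      _ ≤ Real.log (1 + S) := hfin
  have hconv : ∑ i, τ i * Real.logb 2 (1 + γ i / τ i)
      = (∑ i, τ i * Real.log (1 + γ i / τ i)) / Real.log 2 := by
    rw [Finset.sum_div]
    simp [Real.logb, mul_div_assoc]
  have hconv2 : Real.logb 2 (1 + S) = Real.log (1 + S) / Real.log 2 := rfl
  constructor
  · rw [hconv, hconv2]
    gcongr
  constructor
  · intro heq
    rw [hconv, hconv2, div_eq_div_iff (ne_of_gt hlog2) (ne_of_gt hlog2)] at heq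
    have hL : ∑ i, τ i * Real.log (1 + γ i / τ i) = Real.log (1 + S) :=
      mul_right_cancel₀ (ne_of_gt hlog2) heq
    have hBR : ∑ i, (τ i * Real.log (1 + S) + (γ i - τ i * S) / (1 + S)) = Real.log (1 + S) :=
      le_antisymm (hrhs ▸ hfin) (hL ▸ hsumle)
    have hAB : ∑ i, τ i * Real.log (1 + γ i / τ i)
        = ∑ i, (τ i * Real.log (1 + S) + (γ i - τ i * S) / (1 + S)) := by
      rw [hL, hBR]
    have heach := (Finset.sum_eq_sum_iff_of_le (fun i _ => (hterm i).1)).mp hAB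
    intro i
    have hgi : γ i = τ i * S := (hterm i).2.mp (heach i (Finset.mem_univ i))
    rw [eq_div_iff (ne_of_gt hS)]
    linarith
  · intro h
    have hratio : ∀ i, 1 + γ i / τ i = 1 + S := by
      intro i
      rw [h i]
      field_simp
      rw [mul_comm, mul_div_assoc, div_self (ne_of_gt (hγ i)), mul_one]
    have hT1 : T = 1 := by
      rw [hTdef, Finset.sum_congr rfl (fun i _ => h i), ← Finset.sum_div, ← hSdef,
        div_self (ne_of_gt hS)]
    calc ∑ i, τ i * Real.logb 2 (1 + γ i / τ i)
        = ∑ i, τ i * Real.logb 2 (1 + S) := by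
          exact Finset.sum_congr rfl (fun i _ => by rw [hratio i])
      _ = T * Real.logb 2 (1 + S) := by rw [hTdef, Finset.sum_mul]
      _ = Real.logb 2 (1 + S) := by rw [hT1, one_mul]
end

section
/- If τ* maximizes Σᵢ ωᵢ τᵢ log₂(1 + γᵢ/τᵢ) subject to Σᵢ τᵢ = 1, τᵢ > 0, then there exists λ* > 0 such that for every i: ωᵢ · [ln(1 + zᵢ*) - zᵢ*/(1 + zᵢ*)] = λ* ln 2, where zᵢ* = γᵢ/τᵢ*. -/
/-- `log(1+z) - z/(1+z) > 0` for `z > 0`. -/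
lemma stmt9_fpos (z : ℝ) (hz : 0 < z) : 0 < Real.log (1 + z) - z / (1 + z) := by
  have h1 : (0:ℝ) < 1 + z := by linarith
  have hlt : (1 + z)⁻¹ < 1 := by
    rw [inv_lt_one_iff₀]; right; linarith
  have hkey := Real.log_lt_sub_one_of_pos (x := (1 + z)⁻¹) (by positivity) (by linarith)
  rw [Real.log_inv] at hkey
  have hz' : z / (1 + z) = 1 - (1 + z)⁻¹ := by field_simp; ring
  linarith

/-- Derivative of `t ↦ t * log(1 + γ/t)` at `s > 0`. -/
lemma stmt9_hasDerivAt (g s : ℝ) (hg : 0 < g) (hs : 0 < s) :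
    HasDerivAt (fun t : ℝ => t * Real.log (1 + g / t))
      (Real.log (1 + g / s) - (g / s) / (1 + g / s)) s := by
  have hne : s ≠ 0 := hs.ne'
  have h1 : (0:ℝ) < 1 + g / s := by positivity
  have hinner : HasDerivAt (fun t : ℝ => 1 + g / t) (g * (-(s ^ 2)⁻¹)) s := by
    have := ((hasDerivAt_inv hne).const_mul g).const_add 1
    simpa [div_eq_mul_inv] using this
  have hlog : HasDerivAt (fun t : ℝ => Real.log (1 + g / t))
      (g * (-(s ^ 2)⁻¹) / (1 + g / s)) s := hinner.log h1.ne'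
  have hmul := (hasDerivAt_id' s).fun_mul hlog
  refine hmul.congr_deriv ?_
  have h1ne : (1 + g / s) ≠ 0 := h1.ne'
  field_simp
  ring

/-- Derivative of `t ↦ w * (t * logb 2 (1 + γ/t))` at `s > 0`. -/
lemma stmt9_hasDerivAt' (w g s : ℝ) (hg : 0 < g) (hs : 0 < s) :
    HasDerivAt (fun t : ℝ => w * (t * Real.logb 2 (1 + g / t)))
      (w / Real.log 2 * (Real.log (1 + g / s) - (g / s) / (1 + g / s))) s := by
  have heq : (fun t : ℝ => w * (t * Real.logb 2 (1 + g / t)))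
      = fun t : ℝ => w / Real.log 2 * (t * Real.log (1 + g / t)) := by
    funext t
    simp only [Real.logb]
    ring
  rw [heq]
  exact (stmt9_hasDerivAt g s hg hs).const_mul _

/-- Two-coordinate perturbation consequence: equal marginal values. -/
lemma stmt9_key (wa wb ga gb a b : ℝ) (hga : 0 < ga) (hgb : 0 < gb)
    (ha : 0 < a) (hb : 0 < b)
    (hloc : ∀ t : ℝ, |t| < min a b →
      wa * ((a + t) * Real.logb 2 (1 + ga / (a + t)))
        + wb * ((b - t) * Real.logb 2 (1 + gb / (b - t)))
      ≤ wa * (a * Real.logb 2 (1 + ga / a)) + wb * (b * Real.logb 2 (1 + gb / b))) :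
    wa / Real.log 2 * (Real.log (1 + ga / a) - (ga / a) / (1 + ga / a))
      = wb / Real.log 2 * (Real.log (1 + gb / b) - (gb / b) / (1 + gb / b)) := by
  set da := wa / Real.log 2 * (Real.log (1 + ga / a) - (ga / a) / (1 + ga / a)) with hda
  set db := wb / Real.log 2 * (Real.log (1 + gb / b) - (gb / b) / (1 + gb / b)) with hdb
  set G : ℝ → ℝ := fun t => wa * ((a + t) * Real.logb 2 (1 + ga / (a + t)))
        + wb * ((b - t) * Real.logb 2 (1 + gb / (b - t))) with hG
  have hδ : 0 < min a b := lt_min ha hb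
  have hlocmax : IsLocalMax G 0 := by
    have hev : ∀ᶠ t in nhds (0:ℝ), |t| < min a b := by
      have := eventually_abs_sub_lt (0:ℝ) hδ
      simpa using this
    filter_upwards [hev] with t ht
    have := hloc t ht
    simpa [hG] using this
  have h1 : HasDerivAt (fun t : ℝ => a + t) 1 0 := by
    simpa using (hasDerivAt_id (0:ℝ)).const_add a
  have h2 : HasDerivAt (fun t : ℝ => b - t) (-1) 0 := by
    simpa using (hasDerivAt_id (0:ℝ)).const_sub b
  have hia : HasDerivAt (fun s : ℝ => wa * (s * Real.logb 2 (1 + ga / s))) da (a + 0) := by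
    simpa using stmt9_hasDerivAt' wa ga a hga ha
  have hib : HasDerivAt (fun s : ℝ => wb * (s * Real.logb 2 (1 + gb / s))) db (b - 0) := by
    simpa using stmt9_hasDerivAt' wb gb b hgb hb
  have hGa := hia.comp 0 h1
  have hGb := hib.comp 0 h2
  have hGd : HasDerivAt G (da * 1 + db * (-1)) 0 := HasDerivAt.add hGa hGb
  have hzero := hlocmax.hasDerivAt_eq_zero hGd
  linarith [hzero]

/-- If τ* maximizes Σᵢ ωᵢ τᵢ log₂(1 + γᵢ/τᵢ) subject to Σᵢ τᵢ = 1, τᵢ > 0,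
then there is λ* > 0 with ωᵢ·[ln(1+zᵢ*) - zᵢ*/(1+zᵢ*)] = λ* ln 2 for all i,
where zᵢ* = γᵢ/τᵢ*. -/
theorem stmt_9 (K : ℕ) (ω γ : Fin K → ℝ) (hω : ∀ i, 0 < ω i) (hγ : ∀ i, 0 < γ i)
    (τstar : Fin K → ℝ) (hpos : ∀ i, 0 < τstar i) (hsum : ∑ i, τstar i = 1)
    (hmax : ∀ τ : Fin K → ℝ, (∀ i, 0 < τ i) → (∑ i, τ i = 1) →
      ∑ i, ω i * (τ i * Real.logb 2 (1 + γ i / τ i)) ≤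
        ∑ i, ω i * (τstar i * Real.logb 2 (1 + γ i / τstar i))) :
    ∃ lam : ℝ, 0 < lam ∧ ∀ i,
      ω i * (Real.log (1 + γ i / τstar i) -
        (γ i / τstar i) / (1 + γ i / τstar i)) = lam * Real.log 2 := by
  have hK : 0 < K := by
    rcases Nat.eq_zero_or_pos K with h | h
    · subst h; simp at hsum
    · exact h
  have hlog2 : (0:ℝ) < Real.log 2 := Real.log_pos (by norm_num)
  set D : Fin K → ℝ := fun i => Real.log (1 + γ i / τstar i)
      - (γ i / τstar i) / (1 + γ i / τstar i) with hD
  have hDpos : ∀ i, 0 < D i := fun i => stmt9_fpos _ (div_pos (hγ i) (hpos i))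
  -- key equality of marginals
  have key : ∀ i j, ω i * D i = ω j * D j := by
    intro i j
    by_cases hij : i = j
    · rw [hij]
    -- perturbation
    have hkey : ω i / Real.log 2 * D i = ω j / Real.log 2 * D j := by
      apply stmt9_key (ω i) (ω j) (γ i) (γ j) (τstar i) (τstar j)
        (hγ i) (hγ j) (hpos i) (hpos j)
      intro t ht
      set τ' : Fin K → ℝ := fun k =>
        τstar k + (if k = i then t else 0) - (if k = j then t else 0) with hτ'
      have hti : -τstar i < t := by
        have := abs_lt.mp ht
        have := this.1
        have : -(min (τstar i) (τstar j)) < t := this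
        have hmin : min (τstar i) (τstar j) ≤ τstar i := min_le_left _ _
        linarith
      have htj : t < τstar j := by
        have := (abs_lt.mp ht).2
        have hmin : min (τstar i) (τstar j) ≤ τstar j := min_le_right _ _
        linarith
      have hτ'pos : ∀ k, 0 < τ' k := by
        intro k
        by_cases hk : k = i
        · subst hk
          have : τ' k = τstar k + t := by simp [hτ', hij]
          rw [this]; linarith
        · by_cases hk' : k = j
          · subst hk'
            have : τ' k = τstar k - t := by simp [hτ', hk]
            rw [this]
            have := hpos k
            linarith
          · simp only [hτ', if_neg hk, if_neg hk']
            have := hpos k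
            linarith
      have hτ'sum : ∑ k, τ' k = 1 := by
        simp only [hτ']
        rw [Finset.sum_sub_distrib, Finset.sum_add_distrib]
        rw [Finset.sum_ite_eq' Finset.univ i (fun _ => t),
          Finset.sum_ite_eq' Finset.univ j (fun _ => t)]
        simp [hsum]
      have hle := hmax τ' hτ'pos hτ'sum
      -- sum decomposition
      have hdecomp : ∀ τ : Fin K → ℝ,
          ∑ k, ω k * (τ k * Real.logb 2 (1 + γ k / τ k))
          = (∑ k ∈ Finset.univ \ {i, j}, ω k * (τ k * Real.logb 2 (1 + γ k / τ k)))
            + (ω i * (τ i * Real.logb 2 (1 + γ i / τ i))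
              + ω j * (τ j * Real.logb 2 (1 + γ j / τ j))) := by
        intro τ
        rw [← Finset.sum_sdiff (Finset.subset_univ ({i, j} : Finset (Fin K))),
          Finset.sum_pair hij]
      rw [hdecomp τ', hdecomp τstar] at hle
      have hsame : ∑ k ∈ Finset.univ \ {i, j}, ω k * (τ' k * Real.logb 2 (1 + γ k / τ' k))
          = ∑ k ∈ Finset.univ \ {i, j}, ω k * (τstar k * Real.logb 2 (1 + γ k / τstar k)) := by
        apply Finset.sum_congr rfl
        intro k hk
        simp only [Finset.mem_sdiff, Finset.mem_insert, Finset.mem_singleton] at hk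
        have hk1 : k ≠ i := fun h => hk.2 (Or.inl h)
        have hk2 : k ≠ j := fun h => hk.2 (Or.inr h)
        simp [hτ', hk1, hk2]
      have hτ'i : τ' i = τstar i + t := by simp [hτ', hij]
      have hτ'j : τ' j = τstar j - t := by
        simp [hτ', (Ne.symm hij : j ≠ i)]
      rw [hsame, hτ'i, hτ'j] at hle
      linarith
    field_simp at hkey
    linarith [hkey]
  -- conclude
  refine ⟨ω ⟨0, hK⟩ * D ⟨0, hK⟩ / Real.log 2, ?_, ?_⟩
  · exact div_pos (mul_pos (hω _) (hDpos _)) hlog2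
  · intro i
    rw [div_mul_cancel₀ _ hlog2.ne']
    exact key i _
end
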